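/- Let $\rho = \frac{1}{2}(|+\rangle\langle+| \otimes |+\rangle\langle+| + |-\rangle\langle-| \otimes |\widetilde{+}\rangle\langle\widetilde{+}|)$ on $\mathbb{C}^2 \otimes \mathbb{C}^2$, where $|\pm\rangle = \frac{1}{\sqrt 2}(|0\rangle \pm |1\rangle)$ and $|\widetilde{+}\rangle = \frac{1}{\sqrt 2}(|0\rangle + i|1\rangle)$. For every $n \geq 1$ and every unit vector $|\psi\rangle \in \mathbb{C}^{4^n}$ that is a linear combination of at most two computational basis vectors, one has $\langle\psi|\rho^{\otimes n}|\psi\rangle \leq \frac{1}{4^n}\left(1 + \frac{\sqrt 2}{2}\right)$. -/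

import Mathlib

open Matrix

noncomputable def plusV : Fin 2 → ℂ := fun _ => 1 / Real.sqrt 2

noncomputable def minusV : Fin 2 → ℂ :=
  fun x => if x = 0 then 1 / Real.sqrt 2 else -(1 / Real.sqrt 2)

noncomputable def tplusV : Fin 2 → ℂ :=
  fun x => if x = 0 then 1 / Real.sqrt 2 else Complex.I / Real.sqrt 2

/-- The state `ρ = ½(|+⟩⟨+|⊗|+⟩⟨+| + |-⟩⟨-|⊗|+̃⟩⟨+̃|)`. -/
noncomputable def boundState : Matrix (Fin 2 × Fin 2) (Fin 2 × Fin 2) ℂ :=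
  ((1 : ℂ) / 2) •
    (Matrix.vecMulVec (fun x => plusV x.1 * plusV x.2)
        (star fun x : Fin 2 × Fin 2 => plusV x.1 * plusV x.2)
      + Matrix.vecMulVec (fun x => minusV x.1 * tplusV x.2)
        (star fun x : Fin 2 × Fin 2 => minusV x.1 * tplusV x.2))

/-- `ρ^{⊗n}` as a matrix indexed by `n`-tuples of basis labels. -/
noncomputable def boundStatePow (n : ℕ) :
    Matrix (Fin n → Fin 2 × Fin 2) (Fin n → Fin 2 × Fin 2) ℂ :=
  Matrix.of fun v w => ∏ k : Fin n, boundState (v k) (w k)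

private lemma h4' : ((Real.sqrt 2 : ℝ) : ℂ) ^ 4 = 4 := by
  have h2 : ((Real.sqrt 2 : ℝ) : ℂ) * ((Real.sqrt 2 : ℝ) : ℂ) = 2 := by
    rw [← Complex.ofReal_mul, Real.mul_self_sqrt (by norm_num)]; norm_num
  have : ((Real.sqrt 2 : ℝ) : ℂ) ^ 4
      = (↑(Real.sqrt 2) * ↑(Real.sqrt 2)) * (↑(Real.sqrt 2) * ↑(Real.sqrt 2)) := by ring
  rw [this, h2]; norm_num

private lemma h4inv' : (((Real.sqrt 2 : ℝ) : ℂ))⁻¹ ^ 4 = 1/4 := by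
  rw [inv_pow, h4']; norm_num

set_option maxHeartbeats 2000000 in
private lemma bentry (a b c d : Fin 2) : boundState (a,b) (c,d) =
    (1/8) * (1 + (if a = c then 1 else -1) *
      ((if b = 0 then 1 else Complex.I) * (if d = 0 then 1 else -Complex.I))) := by
  fin_cases a <;> fin_cases b <;> fin_cases c <;> fin_cases d <;>
    simp only [boundState, plusV, minusV, tplusV, Matrix.vecMulVec_apply, Pi.star_apply,
      star_mul', map_div₀, Complex.conj_I, Matrix.smul_apply, Matrix.add_apply,
      Fin.isValue, Fin.zero_eta, Fin.mk_one, Complex.star_def, map_neg, _root_.map_one, Complex.conj_ofReal,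
      reduceIte, Fin.reduceEq, one_ne_zero] <;>
    field_simp <;>
    ring_nf <;>
    try (simp only [h4', h4inv', Complex.I_sq]; ring)

private lemma habsp : ‖1 + Complex.I‖ = Real.sqrt 2 := by
  rw [Complex.norm_def, Complex.normSq_apply]; norm_num

private lemma habsm : ‖1 + -Complex.I‖ = Real.sqrt 2 := by
  rw [Complex.norm_def, Complex.normSq_apply]; norm_num

private lemma sqrt2_le_two : Real.sqrt 2 ≤ 2 := by
  nlinarith [Real.sq_sqrt (by norm_num : (2:ℝ) ≥ 0), Real.sqrt_nonneg 2]

private lemma babs (x y : Fin 2 × Fin 2) : ‖boundState x y‖ ≤ 1/4 := by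
  obtain ⟨a, b⟩ := x; obtain ⟨c, d⟩ := y
  rw [bentry]
  fin_cases a <;> fin_cases b <;> fin_cases c <;> fin_cases d <;>
    simp [norm_mul, habsp, habsm] <;>
    norm_num [habsp, habsm, sub_eq_add_neg] <;>
    nlinarith [sqrt2_le_two, Real.sqrt_nonneg 2]

private lemma babs' (x y : Fin 2 × Fin 2) (h : x ≠ y) :
    ‖boundState x y‖ ≤ Real.sqrt 2 / 8 := by
  obtain ⟨a, b⟩ := x; obtain ⟨c, d⟩ := y
  rw [bentry]
  fin_cases a <;> fin_cases b <;> fin_cases c <;> fin_cases d <;>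
    first
      | exact absurd rfl h
      | (simp [norm_mul, habsp, habsm, sub_eq_add_neg] <;>
          nlinarith [sqrt2_le_two, Real.sqrt_nonneg 2])

private lemma Mabs (n : ℕ) (v w : Fin n → Fin 2 × Fin 2) :
    ‖boundStatePow n v w‖ ≤ (1/4 : ℝ) ^ n := by
  have : ‖boundStatePow n v w‖
      = ∏ k : Fin n, ‖boundState (v k) (w k)‖ := by
    simp [boundStatePow, norm_prod]
  rw [this]
  calc ∏ k : Fin n, ‖boundState (v k) (w k)‖
      ≤ ∏ _k : Fin n, (1/4 : ℝ) :=
        Finset.prod_le_prod (fun k _ => norm_nonneg _) (fun k _ => babs _ _)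
    _ = (1/4 : ℝ) ^ n := by simp

private lemma Mabs' (n : ℕ) (hn : 1 ≤ n) (v w : Fin n → Fin 2 × Fin 2) (hvw : v ≠ w) :
    ‖boundStatePow n v w‖ ≤ (1/4 : ℝ) ^ n * (Real.sqrt 2 / 2) := by
  obtain ⟨k, hk⟩ := Function.ne_iff.mp hvw
  have habs : ‖boundStatePow n v w‖
      = ∏ j : Fin n, ‖boundState (v j) (w j)‖ := by
    simp [boundStatePow, norm_prod]
  rw [habs, ← Finset.mul_prod_erase Finset.univ _ (Finset.mem_univ k)]
  have h1 : ∏ j ∈ Finset.univ.erase k, ‖boundState (v j) (w j)‖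
      ≤ (1/4 : ℝ) ^ (n - 1) := by
    calc ∏ j ∈ Finset.univ.erase k, ‖boundState (v j) (w j)‖
        ≤ ∏ _j ∈ Finset.univ.erase k, (1/4 : ℝ) :=
          Finset.prod_le_prod (fun j _ => norm_nonneg _) (fun j _ => babs _ _)
      _ = (1/4 : ℝ) ^ (n - 1) := by
          rw [Finset.prod_const, Finset.card_erase_of_mem (Finset.mem_univ k)]
          simp
  have h2 : ‖boundState (v k) (w k)‖ ≤ Real.sqrt 2 / 8 := babs' _ _ hk
  have hpow : (1/4 : ℝ) ^ n = (1/4) * (1/4) ^ (n - 1) := by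
    conv_lhs => rw [show n = 1 + (n - 1) by omega]
    rw [pow_add, pow_one]
  calc ‖boundState (v k) (w k)‖
        * ∏ j ∈ Finset.univ.erase k, ‖boundState (v j) (w j)‖
      ≤ (Real.sqrt 2 / 8) * (1/4 : ℝ) ^ (n - 1) := by
        apply mul_le_mul h2 h1 (Finset.prod_nonneg fun j _ => norm_nonneg _)
          (by positivity)
    _ = (1/4 : ℝ) ^ n * (Real.sqrt 2 / 2) := by rw [hpow]; ring

theorem stmt_12 (n : ℕ) (hn : 1 ≤ n) (ψ : (Fin n → Fin 2 × Fin 2) → ℂ)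
    (hunit : ∑ v, ‖ψ v‖ ^ 2 = 1)
    (hsupp : (Finset.univ.filter fun v => ψ v ≠ 0).card ≤ 2) :
    (star ψ ⬝ᵥ (boundStatePow n) *ᵥ ψ).re
      ≤ 1 / 4 ^ n * (1 + Real.sqrt 2 / 2) := by
  classical
  set M := boundStatePow n with hM
  set qn : ℝ := (1/4 : ℝ) ^ n with hqn
  -- obtain a two-element superset of the support
  have hcard : 2 ≤ (Finset.univ : Finset (Fin n → Fin 2 × Fin 2)).card := by
    rw [Finset.card_univ, Fintype.card_fun]
    have : (4:ℕ) ≤ 4 ^ n := le_self_pow₀ (by norm_num) (by omega)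
    simpa using le_trans (by norm_num) this
  obtain ⟨u, hSu, _, hu2⟩ :=
    Finset.exists_subsuperset_card_eq (Finset.subset_univ
      (Finset.univ.filter fun v => ψ v ≠ 0)) hsupp hcard
  obtain ⟨a, b, hab, rfl⟩ := Finset.card_eq_two.mp hu2
  have hsupport : ∀ v, ψ v ≠ 0 → v = a ∨ v = b := by
    intro v hv
    have : v ∈ ({a, b} : Finset _) := hSu (Finset.mem_filter.mpr ⟨Finset.mem_univ v, hv⟩)
    simpa using this
  -- pointwise bound on the quadratic form by absolute values
  have hform : (star ψ ⬝ᵥ M *ᵥ ψ).re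
      ≤ ∑ v, ∑ w, ‖ψ v‖ * (‖M v w‖ * ‖ψ w‖) := by
    have h1 : star ψ ⬝ᵥ M *ᵥ ψ = ∑ v, ∑ w, (starRingEnd ℂ) (ψ v) * (M v w * ψ w) := by
      simp only [dotProduct, mulVec, Pi.star_apply, Complex.star_def, Finset.mul_sum]
    rw [h1, Complex.re_sum]
    apply Finset.sum_le_sum
    intro v _
    rw [Complex.re_sum]
    apply Finset.sum_le_sum
    intro w _
    calc ((starRingEnd ℂ) (ψ v) * (M v w * ψ w)).re
        ≤ ‖(starRingEnd ℂ) (ψ v) * (M v w * ψ w)‖ := Complex.re_le_norm _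
      _ = ‖ψ v‖ * (‖M v w‖ * ‖ψ w‖) := by
          rw [norm_mul, norm_mul, Complex.norm_conj]
  -- restrict the double sum to `{a, b}`
  have hzero : ∀ v, v ∉ ({a, b} : Finset _) → ‖ψ v‖ = 0 := by
    intro v hv
    by_contra h
    have : ψ v ≠ 0 := fun h0 => h (by simp [h0])
    rcases hsupport v this with rfl | rfl <;> simp at hv
  have hrestrict : ∑ v, ∑ w, ‖ψ v‖ * (‖M v w‖ * ‖ψ w‖)
      = ∑ v ∈ ({a, b} : Finset _), ∑ w ∈ ({a, b} : Finset _),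
          ‖ψ v‖ * (‖M v w‖ * ‖ψ w‖) := by
    rw [← Finset.sum_subset (Finset.subset_univ ({a, b} : Finset _))
      (fun v _ hv => by rw [hzero v hv]; simp)]
    apply Finset.sum_congr rfl
    intro v _
    rw [← Finset.sum_subset (Finset.subset_univ ({a, b} : Finset _))
      (fun w _ hw => by rw [hzero w hw]; simp)]
  -- the norms of the two support coefficients
  set x : ℝ := ‖ψ a‖ with hx
  set y : ℝ := ‖ψ b‖ with hy
  have hx0 : 0 ≤ x := norm_nonneg _
  have hy0 : 0 ≤ y := norm_nonneg _
  have hxy : x ^ 2 + y ^ 2 ≤ 1 := by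
    rw [← hunit]
    have : ∑ v ∈ ({a, b} : Finset _), ‖ψ v‖ ^ 2 = x ^ 2 + y ^ 2 := by
      rw [Finset.sum_pair hab]
    rw [← this]
    exact Finset.sum_le_sum_of_subset_of_nonneg (Finset.subset_univ _)
      (fun v _ _ => by positivity)
  have hqn_pos : (0:ℝ) < qn := by positivity
  have hs2 : (0:ℝ) ≤ Real.sqrt 2 := Real.sqrt_nonneg 2
  -- expand the 2×2 sum and bound
  have hexpand : ∑ v ∈ ({a, b} : Finset _), ∑ w ∈ ({a, b} : Finset _),
      ‖ψ v‖ * (‖M v w‖ * ‖ψ w‖)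
      = x * (‖M a a‖ * x) + x * (‖M a b‖ * y)
        + (y * (‖M b a‖ * x) + y * (‖M b b‖ * y)) := by
    rw [Finset.sum_pair hab, Finset.sum_pair hab, Finset.sum_pair hab]
  have hMaa : ‖M a a‖ ≤ qn := Mabs n a a
  have hMbb : ‖M b b‖ ≤ qn := Mabs n b b
  have hMab : ‖M a b‖ ≤ qn * (Real.sqrt 2 / 2) := Mabs' n hn a b hab
  have hMba : ‖M b a‖ ≤ qn * (Real.sqrt 2 / 2) := Mabs' n hn b a hab.symm
  have htarget : (1:ℝ) / 4 ^ n * (1 + Real.sqrt 2 / 2) = qn * (1 + Real.sqrt 2 / 2) := by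
    rw [hqn, one_div, ← inv_pow, one_div]
  rw [htarget]
  calc (star ψ ⬝ᵥ M *ᵥ ψ).re
      ≤ ∑ v, ∑ w, ‖ψ v‖ * (‖M v w‖ * ‖ψ w‖) := hform
    _ = x * (‖M a a‖ * x) + x * (‖M a b‖ * y)
        + (y * (‖M b a‖ * x) + y * (‖M b b‖ * y)) := by
        rw [hrestrict, hexpand]
    _ ≤ x * (qn * x) + x * (qn * (Real.sqrt 2 / 2) * y)
        + (y * (qn * (Real.sqrt 2 / 2) * x) + y * (qn * y)) := by
        gcongr <;> exact norm_nonneg _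
    _ ≤ qn * (1 + Real.sqrt 2 / 2) := by
        have h2xy : 2 * (x * y) ≤ 1 := by nlinarith [sq_nonneg (x - y)]
        have e1 : qn * (x ^ 2 + y ^ 2) ≤ qn * 1 :=
          mul_le_mul_of_nonneg_left hxy hqn_pos.le
        have e2 : (qn * (Real.sqrt 2 / 2)) * (2 * (x * y))
            ≤ (qn * (Real.sqrt 2 / 2)) * 1 :=
          mul_le_mul_of_nonneg_left h2xy (by positivity)
        nlinarith [e1, e2]
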